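/- Let all parameters s, L, a, r, K, b, λ, β, ψ, φ, μ, ν, e, f be positive reals. The characteristic polynomial of the Jacobian matrix J evaluated at the equilibrium E₁ = (L, 0, 0, 0) equals (X + s)(X - (r - bL))(X + μ + ψ + eL)(X + ν + φ + fL); consequently all four eigenvalues of J at E₁ are negative if and only if L > r/b. -/

import Mathlib

set_option maxHeartbeats 2000000


open Polynomial

theorem my_det_fin_four {R : Type*} [CommRing R] (A : Matrix (Fin 4) (Fin 4) R) :
    A.det =
      A 0 0 * (A 1 1 * (A 2 2 * A 3 3 - A 2 3 * A 3 2) - A 1 2 * (A 2 1 * A 3 3 - A 2 3 * A 3 1) + A 1 3 * (A 2 1 * A 3 2 - A 2 2 * A 3 1))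
    - A 0 1 * (A 1 0 * (A 2 2 * A 3 3 - A 2 3 * A 3 2) - A 1 2 * (A 2 0 * A 3 3 - A 2 3 * A 3 0) + A 1 3 * (A 2 0 * A 3 2 - A 2 2 * A 3 0))
    + A 0 2 * (A 1 0 * (A 2 1 * A 3 3 - A 2 3 * A 3 1) - A 1 1 * (A 2 0 * A 3 3 - A 2 3 * A 3 0) + A 1 3 * (A 2 0 * A 3 1 - A 2 1 * A 3 0))
    - A 0 3 * (A 1 0 * (A 2 1 * A 3 2 - A 2 2 * A 3 1) - A 1 1 * (A 2 0 * A 3 2 - A 2 2 * A 3 0) + A 1 2 * (A 2 0 * A 3 1 - A 2 1 * A 3 0)) := by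
  rw [Matrix.det_succ_row_zero]
  simp [Fin.sum_univ_succ, Matrix.det_fin_three, Fin.succAbove,
    show (2:Fin 3).succ = 3 from rfl, show Fin.castSucc (2:Fin 3) = 2 from rfl]
  ring

/-- The Jacobian matrix of the two-strain ecoepidemic competition model at `(P, S, V, W)`. -/
noncomputable def ecoJac (s L a r K b lam beta psi phi mu nu e f P S V W : ℝ) :
    Matrix (Fin 4) (Fin 4) ℝ :=
  !![s - 2*s*P/L - a*S, -(a*P), 0, 0;
     -(b*S), r - 2*r*S/K - lam*V - beta*W - b*P, -(lam*S) + psi, -(beta*S) + phi;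
     -(e*V), lam*V, lam*S - mu - psi - e*P, 0;
     -(f*W), beta*W, 0, beta*S - nu - phi - f*P]

/-- At the equilibrium `E₁ = (L,0,0,0)` the characteristic polynomial of the Jacobian is
`(X + s)(X - (r - bL))(X + μ + ψ + eL)(X + ν + φ + fL)`; consequently all four
eigenvalues are negative iff `L > r/b`. -/
theorem E1_charpoly_and_stability
    (s L a r K b lam beta psi phi mu nu e f : ℝ)
    (hs : 0 < s) (hL : 0 < L) (ha : 0 < a) (hr : 0 < r) (hK : 0 < K) (hb : 0 < b)
    (hlam : 0 < lam) (hbeta : 0 < beta) (hpsi : 0 < psi) (hphi : 0 < phi)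
    (hmu : 0 < mu) (hnu : 0 < nu) (he : 0 < e) (hf : 0 < f) :
    (ecoJac s L a r K b lam beta psi phi mu nu e f L 0 0 0).charpoly
        = (X + C s) * (X - C (r - b * L)) * (X + C (mu + psi + e * L))
            * (X + C (nu + phi + f * L)) ∧
    ((∀ x : ℝ,
        (ecoJac s L a r K b lam beta psi phi mu nu e f L 0 0 0).charpoly.IsRoot x →
          x < 0) ↔ L > r / b) := by
  have hchar : (ecoJac s L a r K b lam beta psi phi mu nu e f L 0 0 0).charpoly
        = (X + C s) * (X - C (r - b * L)) * (X + C (mu + psi + e * L))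
            * (X + C (nu + phi + f * L)) := by
    have hL' : L ≠ 0 := hL.ne'
    have hM : ecoJac s L a r K b lam beta psi phi mu nu e f L 0 0 0
        = !![-s, -(a*L), 0, 0; 0, r - b*L, psi, phi;
             0, 0, -(mu+psi+e*L), 0; 0, 0, 0, -(nu+phi+f*L)] := by
      ext i j
      fin_cases i <;> fin_cases j <;> (try simp [ecoJac]) <;> (try field_simp) <;> (try ring)
    rw [hM, Matrix.charpoly, my_det_fin_four]
    simp [Matrix.charmatrix_apply, Matrix.diagonal, Matrix.vecHead, Matrix.vecTail, Function.comp]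
    ring
  refine ⟨hchar, ?_⟩
  constructor
  · intro h
    have := h (r - b * L) (by
      rw [hchar]; simp [IsRoot])
    have hb' : r / b < L := by
      rw [div_lt_iff₀ hb]
      linarith [this]
    exact hb'
  · intro hLb x hx
    rw [hchar] at hx
    simp only [IsRoot, eval_mul, eval_add, eval_sub, eval_X, eval_C, mul_eq_zero] at hx
    have hrb : r - b * L < 0 := by
      have := (div_lt_iff₀ hb).mp hLb
      linarith
    rcases hx with ((h1 | h2) | h3) | h4
    · linarith
    · linarith
    · nlinarith
    · nlinarith
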